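/- Let T be a rooted tree on n nodes with height h. Then T can be embedded into a binary tree B (each node has at most two children) on a superset of its nodes such that the ancestor–descendant relation of T is preserved and the height of B is O(h + log n). -/

import Mathlib

open Finset

noncomputable section
open scoped Classical

/-- A finite rooted tree on vertex set `V`: every vertex reaches the root by
iterating the parent map, and the root is its own parent. -/
structure RTree (V : Type) [Fintype V] [DecidableEq V] where
  root : V
  parent : V → V
  parent_root : parent root = root
  reaches_root : ∀ v, ∃ k, parent^[k] v = root

namespace RTree

variable {V : Type} [Fintype V] [DecidableEq V] (T : RTree V)

/-- `u` is an ancestor of `v` (possibly `u = v`). -/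
def Ancestor (u v : V) : Prop := ∃ k, T.parent^[k] v = u

/-- The depth of a vertex: its distance to the root. -/
def depth (v : V) : ℕ := Nat.find (T.reaches_root v)

/-- The height of the tree: the maximum depth. -/
def height : ℕ := Finset.univ.sup T.depth

/-- The number of descendants of `u` (including `u` itself). -/
def desc (u : V) : ℕ := (Finset.univ.filter (fun v => T.Ancestor u v)).card

/-- The tree is binary: every vertex has at most two children. -/
def Binary : Prop :=
  ∀ u : V, (Finset.univ.filter (fun v => v ≠ T.root ∧ T.parent v = u)).card ≤ 2

/-- `x` is a leaf: it has no children. -/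
def IsLeaf (x : V) : Prop := ∀ v : V, v ≠ T.root → T.parent v ≠ x

end RTree

namespace EmbedAux

open RTree

variable {V : Type} [Fintype V] [DecidableEq V] (T : RTree V)

lemma depth_spec (v : V) : T.parent^[T.depth v] v = T.root := Nat.find_spec (T.reaches_root v)

lemma depth_le (v : V) {k : ℕ} (h : T.parent^[k] v = T.root) : T.depth v ≤ k :=
  Nat.find_min' _ h

lemma depth_root : T.depth T.root = 0 :=
  Nat.le_zero.mp (depth_le T T.root (k := 0) rfl)

lemma eq_root_of_depth_eq_zero {v : V} (h : T.depth v = 0) : v = T.root := by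
  have := depth_spec T v
  rwa [h] at this

lemma iterate_root (k : ℕ) : T.parent^[k] T.root = T.root := by
  induction k with
  | zero => rfl
  | succ k ih => rw [Function.iterate_succ_apply', ih, T.parent_root]

lemma depth_pos {v : V} (h : v ≠ T.root) : 0 < T.depth v := by
  rcases Nat.eq_zero_or_pos (T.depth v) with h0 | h0
  · exact absurd (eq_root_of_depth_eq_zero T h0) h
  · exact h0

lemma depth_parent {v : V} (h : v ≠ T.root) : T.depth (T.parent v) = T.depth v - 1 := by
  have hp := depth_pos T h
  have h1 : T.depth (T.parent v) ≤ T.depth v - 1 := by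
    apply depth_le
    have hs := depth_spec T v
    rw [show T.depth v = (T.depth v - 1) + 1 from by omega,
      Function.iterate_succ_apply] at hs
    exact hs
  have h2 : T.depth v ≤ T.depth (T.parent v) + 1 := by
    apply depth_le
    rw [Function.iterate_succ_apply]
    exact depth_spec T (T.parent v)
  omega

lemma depth_parent_lt {v : V} (h : v ≠ T.root) : T.depth (T.parent v) < T.depth v := by
  have := depth_parent T h
  have := depth_pos T h
  omega

lemma iterate_of_ge_depth (v : V) {k : ℕ} (h : T.depth v ≤ k) : T.parent^[k] v = T.root := by
  have : T.parent^[k] v = T.parent^[k - T.depth v] (T.parent^[T.depth v] v) := by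
    rw [← Function.iterate_add_apply, Nat.sub_add_cancel h]
  rw [this, depth_spec, iterate_root]

lemma depth_iterate_eq {u v : V} {k : ℕ} (h : T.parent^[k] v = u) (hk : k ≤ T.depth v) :
    T.depth u = T.depth v - k := by
  have h1 : T.depth u ≤ T.depth v - k := by
    apply depth_le
    rw [← h, ← Function.iterate_add_apply, Nat.sub_add_cancel hk]
    exact depth_spec T v
  have h2 : T.depth v ≤ T.depth u + k := by
    apply depth_le
    rw [Function.iterate_add_apply, h]
    exact depth_spec T u
  omega

lemma anc_depth_le {u v : V} (h : T.Ancestor u v) : T.depth u ≤ T.depth v := by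
  obtain ⟨k, hk⟩ := h
  rcases le_or_gt k (T.depth v) with hle | hlt
  · have := depth_iterate_eq T hk hle; omega
  · have : u = T.root := by rw [← hk]; exact iterate_of_ge_depth T v (by omega)
    rw [this, depth_root]; omega

lemma anc_refl (v : V) : T.Ancestor v v := ⟨0, rfl⟩

lemma anc_trans {a b c : V} (h1 : T.Ancestor a b) (h2 : T.Ancestor b c) : T.Ancestor a c := by
  obtain ⟨k, hk⟩ := h1; obtain ⟨j, hj⟩ := h2
  exact ⟨k + j, by rw [Function.iterate_add_apply, hj, hk]⟩

lemma anc_root (v : V) : T.Ancestor T.root v := ⟨T.depth v, depth_spec T v⟩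

lemma anc_of_root {v : V} (h : T.Ancestor v T.root) : v = T.root := by
  obtain ⟨k, hk⟩ := h
  rw [iterate_root] at hk; exact hk.symm

lemma anc_antisymm {u v : V} (h1 : T.Ancestor u v) (h2 : T.Ancestor v u) : u = v := by
  have d1 := anc_depth_le T h1
  have d2 := anc_depth_le T h2
  obtain ⟨k, hk⟩ := h1
  rcases le_or_gt k (T.depth v) with hle | hlt
  · have := depth_iterate_eq T hk hle
    have hk0 : k = 0 := by
      by_cases hv : v = T.root
      · subst hv; rw [iterate_root] at hk; subst hk; omega
      · have := depth_pos T hv; omega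
    rw [hk0] at hk; exact hk.symm
  · have hu : u = T.root := by rw [← hk]; exact iterate_of_ge_depth T v (by omega)
    subst hu
    exact (anc_of_root T h2).symm

lemma unique_anc_at_depth {a b x : V} (h1 : T.Ancestor a x) (h2 : T.Ancestor b x)
    (hd : T.depth a = T.depth b) : a = b := by
  obtain ⟨k, hk⟩ := h1; obtain ⟨j, hj⟩ := h2
  rcases le_or_gt k (T.depth x) with hk' | hk'
  · rcases le_or_gt j (T.depth x) with hj' | hj'
    · have e1 := depth_iterate_eq T hk hk'
      have e2 := depth_iterate_eq T hj hj'
      have : k = j := by omega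
      rw [← hk, ← hj, this]
    · have hb : b = T.root := by rw [← hj]; exact iterate_of_ge_depth T x (by omega)
      have e1 := depth_iterate_eq T hk hk'
      have : T.depth a = 0 := by rw [hd, hb, depth_root]
      rw [eq_root_of_depth_eq_zero T this, hb]
  · have ha : a = T.root := by rw [← hk]; exact iterate_of_ge_depth T x (by omega)
    rcases le_or_gt j (T.depth x) with hj' | hj'
    · have e2 := depth_iterate_eq T hj hj'
      have : T.depth b = 0 := by rw [← hd, ha, depth_root]
      rw [ha, eq_root_of_depth_eq_zero T this]
    · have hb : b = T.root := by rw [← hj]; exact iterate_of_ge_depth T x (by omega)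
      rw [ha, hb]

lemma anc_parent (v : V) : T.Ancestor (T.parent v) v := ⟨1, rfl⟩

lemma parent_ne_self {v : V} (h : v ≠ T.root) : T.parent v ≠ v := by
  intro he
  have h1 := depth_parent T h
  rw [he] at h1
  have := depth_pos T h
  omega

lemma desc_pos (u : V) : 0 < T.desc u := by
  apply Finset.card_pos.mpr
  exact ⟨u, by simp [anc_refl]⟩

lemma desc_lt_of_child {w : V} (hw : w ≠ T.root) : T.desc w < T.desc (T.parent w) := by
  have hsub : Finset.univ.filter (fun v => T.Ancestor w v) ⊆
      (Finset.univ.filter (fun v => T.Ancestor (T.parent w) v)).erase (T.parent w) := by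
    intro x hx
    simp only [Finset.mem_filter, Finset.mem_univ, true_and] at hx
    rw [Finset.mem_erase]
    refine ⟨?_, by
      simp only [Finset.mem_filter, Finset.mem_univ, true_and]
      exact anc_trans T (anc_parent T w) hx⟩
    intro hxu
    rw [hxu] at hx
    have hwp : w = T.parent w := anc_antisymm T hx (anc_parent T w)
    exact parent_ne_self T hw hwp.symm
  have h1 := Finset.card_le_card hsub
  rw [Finset.card_erase_of_mem (by simp [anc_refl])] at h1
  have hpos : 0 < (Finset.univ.filter (fun v => T.Ancestor (T.parent w) v)).card :=
    Finset.card_pos.mpr ⟨T.parent w, by simp [anc_refl]⟩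
  show (Finset.univ.filter (fun v => T.Ancestor w v)).card
    < (Finset.univ.filter (fun v => T.Ancestor (T.parent w) v)).card
  omega

lemma depth_child {w : V} (hw : w ≠ T.root) : T.depth w = T.depth (T.parent w) + 1 := by
  have := depth_parent T hw
  have := depth_pos T hw
  omega

/-- descendant sets of distinct children of `u` are disjoint, hence sizes sum below desc u. -/
lemma children_desc_sum (u : V) :
    (∑ w ∈ Finset.univ.filter (fun w => w ≠ T.root ∧ T.parent w = u), T.desc w)
      ≤ T.desc u - 1 := by
  classical
  set C := Finset.univ.filter (fun w => w ≠ T.root ∧ T.parent w = u) with hC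
  have hdisj : ∀ w ∈ C, ∀ w' ∈ C, w ≠ w' →
      Disjoint (Finset.univ.filter (fun v => T.Ancestor w v))
        (Finset.univ.filter (fun v => T.Ancestor w' v)) := by
    intro w hw w' hw' hne
    simp only [hC, Finset.mem_filter, Finset.mem_univ, true_and] at hw hw'
    rw [Finset.disjoint_left]
    intro x hx hx'
    simp only [Finset.mem_filter, Finset.mem_univ, true_and] at hx hx'
    apply hne
    apply unique_anc_at_depth T hx hx'
    rw [depth_child T hw.1, depth_child T hw'.1, hw.2, hw'.2]
  have hcard : (∑ w ∈ C, T.desc w) = (C.biUnion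
      (fun w => Finset.univ.filter (fun v => T.Ancestor w v))).card := by
    rw [Finset.card_biUnion hdisj]
    rfl
  rw [hcard]
  have hsub : (C.biUnion (fun w => Finset.univ.filter (fun v => T.Ancestor w v))) ⊆
      (Finset.univ.filter (fun v => T.Ancestor u v)).erase u := by
    intro x hx
    rw [Finset.mem_biUnion] at hx
    obtain ⟨w, hw, hx⟩ := hx
    simp only [hC, Finset.mem_filter, Finset.mem_univ, true_and] at hw hx
    rw [Finset.mem_erase]
    constructor
    · intro hxu
      rw [hxu] at hx
      have hwp : w = u := anc_antisymm T hx (hw.2 ▸ anc_parent T w)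
      exact parent_ne_self T hw.1 (hw.2.trans hwp.symm)
    · simp only [Finset.mem_filter, Finset.mem_univ, true_and]
      exact anc_trans T (hw.2 ▸ anc_parent T w) hx
  have h1 := Finset.card_le_card hsub
  rw [Finset.card_erase_of_mem (by simp [anc_refl])] at h1
  have hpos : 0 < (Finset.univ.filter (fun v => T.Ancestor u v)).card :=
    Finset.card_pos.mpr ⟨u, by simp [anc_refl]⟩
  show _ ≤ (Finset.univ.filter (fun v => T.Ancestor u v)).card - 1
  omega



/-- `l` binary digits of `q`, most significant first. -/
def bitsLen : ℕ → ℕ → List Bool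
  | 0, _ => []
  | (l+1), q => bitsLen l (q/2) ++ [decide (q % 2 = 1)]

/-- heap index (1-based) of a binary string. -/
def idxN (s : List Bool) : ℕ := s.foldl (fun i b => 2*i + cond b 1 0) 1

lemma idxN_nil : idxN ([] : List Bool) = 1 := rfl

lemma idxN_concat (s : List Bool) (b : Bool) :
    idxN (s ++ [b]) = 2 * idxN s + cond b 1 0 := by
  simp [idxN, List.foldl_append]

lemma idxN_pos (s : List Bool) : 1 ≤ idxN s := by
  induction s using List.reverseRecOn with
  | nil => simp [idxN_nil]
  | append_singleton s b ih => rw [idxN_concat]; omega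

lemma idxN_lt (s : List Bool) : idxN s < 2 ^ (s.length + 1) := by
  induction s using List.reverseRecOn with
  | nil => simp [idxN_nil]
  | append_singleton s b ih =>
      rw [idxN_concat]
      have : cond b 1 0 ≤ 1 := by cases b <;> simp
      simp only [List.length_append, List.length_singleton]
      have h2 : 2 * idxN s + cond b 1 0 < 2 * 2 ^ (s.length + 1) := by omega
      calc 2 * idxN s + cond b 1 0 < 2 * 2 ^ (s.length + 1) := h2
        _ = 2 ^ (s.length + 1 + 1) := by ring

lemma idxN_inj : ∀ s t : List Bool, idxN s = idxN t → s = t := by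
  intro s
  induction s using List.reverseRecOn with
  | nil =>
      intro t h
      rcases t.eq_nil_or_concat with rfl | ⟨t', b, rfl⟩
      · rfl
      · rw [List.concat_eq_append, idxN_nil, idxN_concat] at h
        have := idxN_pos t'
        cases b <;> simp at h <;> omega
  | append_singleton s a ih =>
      intro t h
      rcases t.eq_nil_or_concat with rfl | ⟨t', b, rfl⟩
      · rw [idxN_nil, idxN_concat] at h
        have := idxN_pos s
        cases a <;> simp at h <;> omega
      · rw [List.concat_eq_append, idxN_concat, idxN_concat] at h
        have h1 := idxN_pos s
        have h2 := idxN_pos t'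
        have hab : a = b := by
          cases a <;> cases b <;> simp at h ⊢ <;> omega
        subst hab
        have : idxN s = idxN t' := by cases a <;> simp at h <;> omega
        rw [List.concat_eq_append, ih t' this]

lemma bitsLen_length (l q : ℕ) : (bitsLen l q).length = l := by
  induction l generalizing q with
  | zero => rfl
  | succ l ih => simp [bitsLen, ih]

lemma idxN_append_bits (s : List Bool) (l q : ℕ) (h : q < 2 ^ l) :
    idxN (s ++ bitsLen l q) = idxN s * 2 ^ l + q := by
  induction l generalizing q with
  | zero => interval_cases q; simp [bitsLen]
  | succ l ih =>
      have hq2 : q / 2 < 2 ^ l := by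
        rw [Nat.div_lt_iff_lt_mul (by norm_num)]
        calc q < 2 ^ (l+1) := h
          _ = 2 ^ l * 2 := by ring
      rw [bitsLen, ← List.append_assoc, idxN_concat, ih _ hq2]
      have : (cond (decide (q % 2 = 1)) 1 0 : ℕ) = q % 2 := by
        rcases Nat.mod_two_eq_zero_or_one q with h2 | h2 <;> simp [h2]
      rw [this]
      have := Nat.div_add_mod q 2
      ring_nf
      omega

lemma bits_prefix_div (l j a : ℕ) : bitsLen l (a / 2 ^ j) <+: bitsLen (l + j) a := by
  induction j generalizing a with
  | zero => simp
  | succ j ih =>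
      have h1 : bitsLen (l + j) (a / 2) ++ [decide (a % 2 = 1)] = bitsLen (l + (j+1)) a := by
        rw [show l + (j+1) = (l + j) + 1 from rfl, bitsLen]
      have h2 : bitsLen l ((a/2) / 2 ^ j) <+: bitsLen (l + j) (a / 2) := ih (a/2)
      rw [Nat.div_div_eq_div_mul, show 2 * 2 ^ j = 2 ^ (j+1) by ring] at h2
      exact h2.trans (h1 ▸ (bitsLen (l+j) (a/2)).prefix_append [decide (a % 2 = 1)])

lemma bits_prefix_elim {l a l' a' : ℕ} (h : bitsLen l a <+: bitsLen l' a')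
    (ha : a < 2 ^ l) (ha' : a' < 2 ^ l') : l ≤ l' ∧ a = a' / 2 ^ (l' - l) := by
  have hle : l ≤ l' := by
    have := h.length_le
    rwa [bitsLen_length, bitsLen_length] at this
  refine ⟨hle, ?_⟩
  have h2 : bitsLen l (a' / 2 ^ (l' - l)) <+: bitsLen l' a' := by
    have := bits_prefix_div l (l' - l) a'
    rwa [Nat.add_sub_cancel' hle] at this
  have heq : bitsLen l a = bitsLen l (a' / 2 ^ (l' - l)) := by
    rcases List.prefix_or_prefix_of_prefix h h2 with hp | hp
    · exact hp.eq_of_length (by rw [bitsLen_length, bitsLen_length])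
    · exact (hp.eq_of_length (by rw [bitsLen_length, bitsLen_length])).symm
  have hd : a' / 2 ^ (l' - l) < 2 ^ l := by
    rw [Nat.div_lt_iff_lt_mul (Nat.pow_pos (by norm_num)), ← Nat.pow_add]
    rwa [Nat.add_sub_cancel' hle]
  have := congrArg idxN heq
  rw [show bitsLen l a = [] ++ bitsLen l a by simp,
      show bitsLen l (a' / 2 ^ (l' - l)) = [] ++ bitsLen l (a' / 2 ^ (l' - l)) by simp] at heq
  have := congrArg idxN heq
  rw [idxN_append_bits _ _ _ ha, idxN_append_bits _ _ _ hd] at this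
  omega


section CodePart

variable {V : Type} [Fintype V] [DecidableEq V] [LinearOrder V] (T : RTree V)

/-- sum of subtree sizes of earlier siblings. -/
def off (v : V) : ℕ :=
  ∑ w ∈ Finset.univ.filter (fun w => w ≠ T.root ∧ T.parent w = T.parent v ∧ w < v),
    T.desc w

def kk (v : V) : ℕ := if T.desc v ≤ 1 then 0 else Nat.log 2 (T.desc v) - 1

def DD (v : V) : ℕ := Nat.clog 2 (T.desc (T.parent v))

def qq (v : V) : ℕ := (off T v + 2 ^ kk T v - 1) / 2 ^ kk T v

def codeW (v : V) : List Bool := bitsLen (DD T v - kk T v) (qq T v)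

lemma two_pow_kk_le {v : V} (h : 2 ≤ T.desc v) : 2 ^ (kk T v + 1) ≤ T.desc v := by
  rw [kk, if_neg (by omega)]
  have hlog : 1 ≤ Nat.log 2 (T.desc v) := Nat.log_pos (by norm_num) h
  rw [Nat.sub_add_cancel hlog]
  exact Nat.pow_log_le_self 2 (by omega)

lemma two_pow_kk_le' (v : V) : 2 ^ kk T v ≤ T.desc v := by
  rcases le_or_gt (T.desc v) 1 with h | h
  · rw [kk, if_pos h]
    have := desc_pos T v
    simpa [Nat.one_le_iff_ne_zero, Nat.pos_iff_ne_zero] using this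
  · have := two_pow_kk_le T (v := v) (by omega)
    have h2 : 2 ^ kk T v < 2 ^ (kk T v + 1) := by
      exact Nat.pow_lt_pow_succ (by norm_num)
    omega

lemma off_le_qq_mul (v : V) : off T v ≤ qq T v * 2 ^ kk T v := by
  have hb : 0 < 2 ^ kk T v := Nat.pow_pos (by norm_num)
  rw [qq]
  have := Nat.div_add_mod' (off T v + 2 ^ kk T v - 1) (2 ^ kk T v)
  have hm := Nat.mod_lt (off T v + 2 ^ kk T v - 1) hb
  omega

lemma qq_mul_lt (v : V) : qq T v * 2 ^ kk T v < off T v + 2 ^ kk T v := by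
  have hb : 0 < 2 ^ kk T v := Nat.pow_pos (by norm_num)
  rw [qq]
  have := Nat.div_add_mod' (off T v + 2 ^ kk T v - 1) (2 ^ kk T v)
  have hm := Nat.mod_lt (off T v + 2 ^ kk T v - 1) hb
  omega

lemma succ_qq_mul_le (v : V) : (qq T v + 1) * 2 ^ kk T v ≤ off T v + T.desc v := by
  have hb : 0 < 2 ^ kk T v := Nat.pow_pos (by norm_num)
  have h1 := qq_mul_lt T v
  rcases le_or_gt (T.desc v) 1 with h | h
  · have hd := desc_pos T v
    have hk : kk T v = 0 := by rw [kk, if_pos h]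
    rw [hk] at h1 ⊢
    simp only [pow_zero, mul_one] at h1 ⊢
    omega
  · have h2 := two_pow_kk_le T (v := v) (by omega)
    have : (qq T v + 1) * 2 ^ kk T v = qq T v * 2 ^ kk T v + 2 ^ kk T v := by ring
    rw [this]
    have hp : 2 ^ (kk T v + 1) = 2 ^ kk T v + 2 ^ kk T v := by ring
    omega

/-- earlier sibling intervals are disjoint: if `a < b` are siblings then
`off a + desc a ≤ off b`. -/
lemma off_lt_sibling {a b : V} (ha : a ≠ T.root) (hpar : T.parent a = T.parent b)
    (hab : a < b) : off T a + T.desc a ≤ off T b := by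
  rw [off, off]
  have hnotmem : a ∉ Finset.univ.filter
      (fun w => w ≠ T.root ∧ T.parent w = T.parent a ∧ w < a) := by
    simp
  have h1 : (Finset.univ.filter (fun w => w ≠ T.root ∧ T.parent w = T.parent a ∧ w < a))
      ∪ {a} ⊆ Finset.univ.filter (fun w => w ≠ T.root ∧ T.parent w = T.parent b ∧ w < b) := by
    intro x hx
    simp only [Finset.mem_union, Finset.mem_filter, Finset.mem_univ, true_and,
      Finset.mem_singleton] at hx ⊢
    rcases hx with ⟨h1, h2, h3⟩ | rfl
    · exact ⟨h1, h2.trans hpar, h3.trans hab⟩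
    · exact ⟨ha, hpar, hab⟩
  calc (∑ w ∈ Finset.univ.filter
        (fun w => w ≠ T.root ∧ T.parent w = T.parent a ∧ w < a), T.desc w) + T.desc a
      = ∑ w ∈ (Finset.univ.filter
        (fun w => w ≠ T.root ∧ T.parent w = T.parent a ∧ w < a)) ∪ {a}, T.desc w := by
        rw [Finset.sum_union (by simpa using hnotmem)]
        simp
    _ ≤ _ := Finset.sum_le_sum_of_subset h1

/-- the interval of `v` lies within the subtree of the parent. -/
lemma off_add_desc_le {v : V} (hv : v ≠ T.root) :
    off T v + T.desc v ≤ T.desc (T.parent v) - 1 := by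
  have h1 : (Finset.univ.filter (fun w => w ≠ T.root ∧ T.parent w = T.parent v ∧ w < v))
      ∪ {v} ⊆ Finset.univ.filter (fun w => w ≠ T.root ∧ T.parent w = T.parent v) := by
    intro x hx
    simp only [Finset.mem_union, Finset.mem_filter, Finset.mem_univ, true_and,
      Finset.mem_singleton] at hx ⊢
    rcases hx with ⟨h1, h2, _⟩ | rfl
    · exact ⟨h1, h2⟩
    · exact ⟨hv, rfl⟩
  have h2 : off T v + T.desc v = ∑ w ∈ (Finset.univ.filter
        (fun w => w ≠ T.root ∧ T.parent w = T.parent v ∧ w < v)) ∪ {v}, T.desc w := by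
    rw [Finset.sum_union (by simp), off]
    simp
  rw [h2]
  calc _ ≤ ∑ w ∈ Finset.univ.filter (fun w => w ≠ T.root ∧ T.parent w = T.parent v),
        T.desc w := Finset.sum_le_sum_of_subset h1
    _ ≤ T.desc (T.parent v) - 1 := children_desc_sum T (T.parent v)

lemma kk_lt_DD {v : V} (hv : v ≠ T.root) : kk T v < DD T v := by
  have hd := desc_lt_of_child T hv
  have hdp : 2 ≤ T.desc (T.parent v) := by
    have := desc_pos T v
    omega
  have hD : T.desc (T.parent v) ≤ 2 ^ DD T v := Nat.le_pow_clog (by norm_num) _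
  rcases le_or_gt (T.desc v) 1 with h | h
  · rw [kk, if_pos h]
    by_contra h0
    have : DD T v = 0 := by omega
    rw [this] at hD
    simp at hD
    omega
  · have h2 := two_pow_kk_le T (v := v) (by omega)
    have : 2 ^ (kk T v + 1) < 2 ^ DD T v := by omega
    have := (Nat.pow_lt_pow_iff_right (a := 2) (by norm_num)).mp this
    omega

lemma qq_lt {v : V} (hv : v ≠ T.root) : qq T v < 2 ^ (DD T v - kk T v) := by
  have h1 := qq_mul_lt T v
  have h2 := two_pow_kk_le' T v
  have h3 := off_add_desc_le T hv
  have hd := desc_pos T (T.parent v)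
  have hD : T.desc (T.parent v) ≤ 2 ^ DD T v := Nat.le_pow_clog (by norm_num) _
  have hkD : kk T v ≤ DD T v := le_of_lt (kk_lt_DD T hv)
  have hsplit : 2 ^ (DD T v - kk T v) * 2 ^ kk T v = 2 ^ DD T v := by
    rw [← pow_add, Nat.sub_add_cancel hkD]
  have hq : qq T v * 2 ^ kk T v < 2 ^ (DD T v - kk T v) * 2 ^ kk T v := by omega
  exact Nat.lt_of_mul_lt_mul_right hq

lemma codeW_length {v : V} : (codeW T v).length = DD T v - kk T v := bitsLen_length _ _

lemma codeW_ne_nil {v : V} (hv : v ≠ T.root) : codeW T v ≠ [] := by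
  have h := kk_lt_DD T hv
  intro hc
  have := codeW_length T (v := v)
  rw [hc] at this
  simp at this
  omega

end CodePart

section SPart

variable {V : Type} [Fintype V] [DecidableEq V] [LinearOrder V] (T : RTree V)

/-- codes of distinct siblings are not prefixes of one another. -/
lemma sibling_code_eq {a b : V} (ha : a ≠ T.root) (hb : b ≠ T.root)
    (hpar : T.parent a = T.parent b) (h : codeW T a <+: codeW T b) : a = b := by
  by_contra hne
  -- same D for both
  have hD : DD T a = DD T b := by rw [DD, DD, hpar]
  obtain ⟨hle, hq⟩ := bits_prefix_elim h (qq_lt T ha) (qq_lt T hb)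
  have hka := kk_lt_DD T ha
  have hkb := kk_lt_DD T hb
  rw [hD] at hka hle
  -- j = kk a - kk b
  have hkba : kk T b ≤ kk T a := by omega
  have hj : DD T b - kk T b - (DD T b - kk T a) = kk T a - kk T b := by omega
  rw [hD, hj] at hq
  set j := kk T a - kk T b with hjdef
  have hsplit : 2 ^ kk T a = 2 ^ j * 2 ^ kk T b := by
    rw [← pow_add]
    congr 1
    omega
  -- x = qq b * 2^(kk b) lies in both intervals
  set x := qq T b * 2 ^ kk T b with hx
  have hx1 : off T b ≤ x := off_le_qq_mul T b
  have hx2 : x < off T b + T.desc b := by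
    have h1 := qq_mul_lt T b
    have h2 := two_pow_kk_le' T b
    omega
  have hx3 : qq T a * 2 ^ kk T a ≤ x := by
    rw [hq, hsplit, ← mul_assoc]
    exact Nat.mul_le_mul_right _ (Nat.div_mul_le_self _ _)
  have hq' : qq T b < (qq T b / 2 ^ j + 1) * 2 ^ j := by
    have := Nat.div_add_mod' (qq T b) (2 ^ j)
    have hm := Nat.mod_lt (qq T b) (y := 2 ^ j) (Nat.pow_pos (by norm_num))
    have : (qq T b / 2 ^ j + 1) * 2 ^ j = qq T b / 2 ^ j * 2 ^ j + 2 ^ j := by ring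
    omega
  have hx4 : x < (qq T a + 1) * 2 ^ kk T a := by
    rw [hx, hq, hsplit, ← mul_assoc]
    exact (Nat.mul_lt_mul_right (Nat.pow_pos (by norm_num))).mpr hq'
  have hx5 : off T a ≤ x := le_trans (off_le_qq_mul T a) hx3
  have hx6 : x < off T a + T.desc a := lt_of_lt_of_le hx4 (succ_qq_mul_le T a)
  rcases lt_or_gt_of_ne hne with hab | hab
  · have := off_lt_sibling T ha hpar hab
    omega
  · have := off_lt_sibling T hb hpar.symm hab
    omega

/-- The full code of a vertex. -/
def S (v : V) : List Bool :=
  if h : v = T.root then [] else S (T.parent v) ++ codeW T v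
  termination_by T.depth v
  decreasing_by exact depth_parent_lt T h

lemma S_root : S T T.root = [] := by rw [S]; simp

lemma S_ne_root {v : V} (h : v ≠ T.root) : S T v = S T (T.parent v) ++ codeW T v := by
  rw [S]; simp [h]

lemma S_nonnil {v : V} (h : v ≠ T.root) : S T v ≠ [] := by
  rw [S_ne_root T h]
  have := codeW_ne_nil T h
  intro hc
  rcases List.append_eq_nil_iff.mp hc with ⟨_, h2⟩
  exact this h2

lemma anc_prefix {u v : V} (h : T.Ancestor u v) : S T u <+: S T v := by
  obtain ⟨k, hk⟩ := h
  revert hk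
  induction k generalizing v with
  | zero =>
      intro hk
      simp only [Function.iterate_zero, id_eq] at hk
      subst hk
      exact List.prefix_refl _
  | succ k ih =>
      intro hk
      by_cases hv : v = T.root
      · subst hv
        rw [iterate_root] at hk
        subst hk
        exact List.prefix_refl _
      · rw [Function.iterate_succ_apply] at hk
        have := ih hk
        rw [S_ne_root T hv]
        exact this.trans ((S T (T.parent v)).prefix_append (codeW T v))

lemma prefix_anc : ∀ u v : V, S T u <+: S T v → T.Ancestor u v := by
  suffices H : ∀ d : ℕ, ∀ u v : V, T.depth u = d → S T u <+: S T v → T.Ancestor u v by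
    intro u v h
    exact H (T.depth u) u v rfl h
  intro d
  induction d using Nat.strong_induction_on with
  | _ d ih =>
    intro u v hd hpre
    by_cases hu : u = T.root
    · subst hu; exact anc_root T v
    · have hq : S T u = S T (T.parent u) ++ codeW T u := S_ne_root T hu
      have hqv : S T (T.parent u) <+: S T v :=
        ((S T (T.parent u)).prefix_append (codeW T u)).trans (hq ▸ hpre)
      have hanc : T.Ancestor (T.parent u) v :=
        ih (T.depth (T.parent u)) (hd ▸ depth_parent_lt T hu) (T.parent u) v rfl hqv
      have hPex : ∃ k, T.parent^[k] v = T.parent u := hanc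
      set k₀ := Nat.find hPex with hk₀
      have hspec : T.parent^[k₀] v = T.parent u := Nat.find_spec hPex
      have hk0pos : k₀ ≠ 0 := by
        intro h0
        rw [h0] at hspec
        simp only [Function.iterate_zero, id] at hspec
        -- v = parent u, so S u <+: S (parent u), length contradiction
        rw [← hspec] at hq
        rw [hq] at hpre
        have hl := hpre.length_le
        rw [List.length_append] at hl
        have := codeW_ne_nil T hu
        have : (codeW T u).length ≠ 0 := by
          simpa [List.length_eq_zero_iff] using this
        omega
      set w := T.parent^[k₀ - 1] v with hw
      have hpw : T.parent w = T.parent u := by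
        have hmain : T.parent^[(k₀ - 1) + 1] v = T.parent u := by
          rw [Nat.sub_add_cancel (by omega)]
          exact hspec
        rw [Function.iterate_succ_apply'] at hmain
        rw [hw]
        exact hmain
      have hwroot : w ≠ T.root := by
        intro hr
        have hgoal : T.parent^[k₀ - 1] v = T.parent u := by
          rw [hr, T.parent_root] at hpw
          rw [← hw, hr]
          exact hpw
        exact Nat.find_min hPex (by omega) hgoal
      have hancw : T.Ancestor w v := ⟨k₀ - 1, rfl⟩
      have hSw : S T w <+: S T v := anc_prefix T hancw
      have hSweq : S T w = S T (T.parent u) ++ codeW T w := by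
        rw [S_ne_root T hwroot, hpw]
      -- compare codes
      have hcomp := List.prefix_or_prefix_of_prefix (hq ▸ hpre) (hSweq ▸ hSw)
      have huw : u = w := by
        rcases hcomp with hc | hc
        · exact sibling_code_eq T hu hwroot (hpw.symm)
            ((List.prefix_append_right_inj _).mp hc)
        · exact (sibling_code_eq T hwroot hu hpw
            ((List.prefix_append_right_inj _).mp hc)).symm
      rw [huw]
      exact hancw

lemma S_inj {u v : V} (h : S T u = S T v) : u = v :=
  anc_antisymm T (prefix_anc T u v (h ▸ List.prefix_refl _))
    (prefix_anc T v u (h ▸ List.prefix_refl _))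

/-- length bound for codes. -/
lemma S_length_bound : ∀ v : V, (S T v).length + Nat.log 2 (T.desc v)
    ≤ 2 * T.depth v + Nat.log 2 (Fintype.card V) := by
  suffices H : ∀ d : ℕ, ∀ v : V, T.depth v = d →
      (S T v).length + Nat.log 2 (T.desc v) ≤ 2 * T.depth v + Nat.log 2 (Fintype.card V) by
    intro v; exact H (T.depth v) v rfl
  intro d
  induction d using Nat.strong_induction_on with
  | _ d ih =>
    intro v hd
    by_cases hv : v = T.root
    · subst hv
      rw [S_root]
      simp only [List.length_nil, zero_add]
      have : T.desc T.root ≤ Fintype.card V := by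
        rw [RTree.desc, ← Finset.card_univ]
        exact Finset.card_le_card (Finset.filter_subset _ _)
      have := Nat.log_mono_right (b := 2) this
      omega
    · rw [S_ne_root T hv, List.length_append, codeW_length]
      have hih := ih (T.depth (T.parent v)) (hd ▸ depth_parent_lt T hv) (T.parent v) rfl
      have hdp := depth_child T hv
      -- D ≤ log2 (desc parent) + 1
      have hdpos := desc_pos T (T.parent v)
      have hD : DD T v ≤ Nat.log 2 (T.desc (T.parent v)) + 1 := by
        rw [DD, Nat.clog_le_iff_le_pow (by norm_num)]
        exact le_of_lt (Nat.lt_pow_succ_log_self (by norm_num) _)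
      -- log2 (desc v) ≤ kk v + 1
      have hk2 : kk T v ≤ Nat.log 2 (T.desc v) := by
        rw [kk]; split <;> omega
      have hmono : Nat.log 2 (T.desc v) ≤ Nat.log 2 (T.desc (T.parent v)) :=
        Nat.log_mono_right (le_of_lt (desc_lt_of_child T hv))
      have hk : Nat.log 2 (T.desc v) ≤ kk T v + 1 := by
        rcases le_or_gt (T.desc v) 1 with h | h
        · rw [kk, if_pos h]
          have := desc_pos T v
          interval_cases (T.desc v)
          simp
        · rw [kk, if_neg (by omega)]
          have := Nat.log_pos (b := 2) (by norm_num) (n := T.desc v) (by omega)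
          omega
      omega

end SPart

section HeapPart

/-- ℕ-level heap parent. -/
def hpar (j : ℕ) : ℕ := (j - 1) / 2

lemma hpar_lt {j : ℕ} (h : 0 < j) : hpar j < j := by
  rw [hpar]; omega

lemma hpar_iterate_zero : ∀ j : ℕ, hpar^[Nat.log 2 (j + 1)] j = 0 := by
  intro j
  induction j using Nat.strong_induction_on with
  | _ j ih =>
    rcases Nat.eq_zero_or_pos j with rfl | hj
    · simp
    · have h2 : 2 ≤ j + 1 := by omega
      have hlog : Nat.log 2 (j + 1) = Nat.log 2 ((j + 1) / 2) + 1 := by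
        have := Nat.log_div_base 2 (j + 1)
        have hpos := Nat.log_pos (b := 2) (by norm_num) h2
        omega
      rw [hlog, Function.iterate_succ_apply]
      have hp : hpar j = (j + 1) / 2 - 1 := by rw [hpar]; omega
      have hlt : (j + 1) / 2 - 1 < j := by omega
      have := ih _ hlt
      rw [hp]
      have harg : (j + 1) / 2 - 1 + 1 = (j + 1) / 2 := by omega
      rw [← harg] at this ⊢
      exact this

/-- The complete binary heap tree on `Fin m`. -/
def heapTree (m : ℕ) (hm : 0 < m) : RTree (Fin m) where
  root := ⟨0, hm⟩
  parent := fun j => ⟨hpar j.val, lt_of_le_of_lt (by rw [hpar]; omega) j.isLt⟩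
  parent_root := by simp [hpar]
  reaches_root := by
    intro v
    refine ⟨Nat.log 2 (v.val + 1), ?_⟩
    have key : ∀ k : ℕ, ∀ v : Fin m,
        ((fun j : Fin m => (⟨hpar j.val, lt_of_le_of_lt (by rw [hpar]; omega) j.isLt⟩ : Fin m))^[k] v).val
          = hpar^[k] v.val := by
      intro k
      induction k with
      | zero => intro v; rfl
      | succ k ihk =>
          intro v
          rw [Function.iterate_succ_apply, Function.iterate_succ_apply]
          exact ihk _
    apply Fin.ext
    rw [key]
    exact hpar_iterate_zero v.val

lemma heapTree_parent_val (m : ℕ) (hm : 0 < m) (v : Fin m) :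
    ((heapTree m hm).parent v).val = hpar v.val := rfl

lemma heapTree_iterate_val (m : ℕ) (hm : 0 < m) (k : ℕ) (v : Fin m) :
    ((heapTree m hm).parent^[k] v).val = hpar^[k] v.val := by
  induction k generalizing v with
  | zero => rfl
  | succ k ihk =>
      rw [Function.iterate_succ_apply, Function.iterate_succ_apply]
      exact ihk _

lemma heapTree_depth_le (m : ℕ) (hm : 0 < m) (v : Fin m) :
    (heapTree m hm).depth v ≤ Nat.log 2 (v.val + 1) := by
  apply Nat.find_min'
  apply Fin.ext
  rw [heapTree_iterate_val]
  exact hpar_iterate_zero v.val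

lemma heapTree_binary (m : ℕ) (hm : 0 < m) : (heapTree m hm).Binary := by
  intro u
  have hsub : Finset.univ.filter
      (fun v : Fin m => v ≠ (heapTree m hm).root ∧ (heapTree m hm).parent v = u) ⊆
      (Finset.univ.filter (fun v : Fin m => v.val = 2 * u.val + 1)) ∪
      (Finset.univ.filter (fun v : Fin m => v.val = 2 * u.val + 2)) := by
    intro x hx
    simp only [Finset.mem_filter, Finset.mem_univ, true_and, Finset.mem_union] at hx ⊢
    obtain ⟨hx0, hxp⟩ := hx
    have hxv : x.val ≠ 0 := by
      intro h0
      exact hx0 (Fin.ext h0)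
    have : hpar x.val = u.val := congrArg Fin.val hxp
    rw [hpar] at this
    omega
  calc _ ≤ _ := Finset.card_le_card hsub
    _ ≤ _ := Finset.card_union_le _ _
    _ ≤ 2 := by
      have h1 : ∀ w : ℕ, (Finset.univ.filter (fun v : Fin m => v.val = w)).card ≤ 1 := by
        intro w
        apply Finset.card_le_one.mpr
        intro a ha b hb
        simp only [Finset.mem_filter] at ha hb
        exact Fin.ext (ha.2.trans hb.2.symm)
      have := h1 (2 * u.val + 1)
      have := h1 (2 * u.val + 2)
      omega

lemma heapTree_height_le (L : ℕ) :
    (heapTree (2 ^ (L + 1)) (Nat.pow_pos (by norm_num))).height ≤ L + 1 := by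
  apply Finset.sup_le
  intro v _
  calc (heapTree _ _).depth v ≤ Nat.log 2 (v.val + 1) := heapTree_depth_le _ _ v
    _ ≤ Nat.log 2 (2 ^ (L + 1)) := Nat.log_mono_right (by have := v.isLt; omega)
    _ = L + 1 := Nat.log_pow (by norm_num) _

/-- going up `r.length` steps from `idxN (s ++ r) - 1` reaches `idxN s - 1`. -/
lemma hpar_iterate_idx : ∀ r s : List Bool,
    hpar^[r.length] (idxN (s ++ r) - 1) = idxN s - 1 := by
  intro r
  induction r using List.reverseRecOn with
  | nil => intro s; simp
  | append_singleton r b ih =>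
      intro s
      rw [List.length_append, List.length_singleton, ← List.append_assoc]
      rw [Function.iterate_add_apply]
      have h1 : hpar^[1] (idxN ((s ++ r) ++ [b]) - 1) = idxN (s ++ r) - 1 := by
        simp only [Function.iterate_one]
        rw [idxN_concat, hpar]
        have := idxN_pos (s ++ r)
        cases b <;> simp <;> omega
      rw [h1]
      exact ih s

end HeapPart

end EmbedAux

/-- Any rooted tree `T` on `n` nodes with height `h` embeds into a binary
tree `B` (on a superset of its nodes), preserving the ancestor–descendant relation and
with the root mapped to the root, such that the height of `B` is `O(h + log n)`. -/
theorem embed_into_binary_tree :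
    ∃ c : ℕ, ∀ (n : ℕ) (T : RTree (Fin n)),
      ∃ (m : ℕ) (B : RTree (Fin m)) (f : Fin n ↪ Fin m),
        f T.root = B.root ∧ B.Binary ∧
        (∀ u v : Fin n, T.Ancestor u v → B.Ancestor (f u) (f v)) ∧
        B.height ≤ c * (T.height + Nat.log 2 n + 1) := by
  refine ⟨3, fun n T => ?_⟩
  rcases Nat.eq_zero_or_pos n with rfl | hn
  · exact T.root.elim0
  set L : ℕ := 2 * T.height + Nat.log 2 n with hL
  have hm : 0 < 2 ^ (L + 1) := Nat.pow_pos (by norm_num)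
  refine ⟨2 ^ (L + 1), EmbedAux.heapTree _ hm, ?_⟩
  have hlen : ∀ v : Fin n, (EmbedAux.S T v).length ≤ L := by
    intro v
    have h1 := EmbedAux.S_length_bound T v
    rw [Fintype.card_fin] at h1
    have h2 : T.depth v ≤ T.height := Finset.le_sup (Finset.mem_univ v)
    omega
  have hbound : ∀ v : Fin n, EmbedAux.idxN (EmbedAux.S T v) - 1 < 2 ^ (L + 1) := by
    intro v
    have h1 := EmbedAux.idxN_lt (EmbedAux.S T v)
    have h2 : 2 ^ ((EmbedAux.S T v).length + 1) ≤ 2 ^ (L + 1) :=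
      Nat.pow_le_pow_right (by norm_num) (by have := hlen v; omega)
    omega
  refine ⟨⟨fun v => ⟨EmbedAux.idxN (EmbedAux.S T v) - 1, hbound v⟩, ?_⟩, ?_, ?_, ?_, ?_⟩
  · intro u v huv
    simp only [Fin.mk.injEq] at huv
    have h1 := EmbedAux.idxN_pos (EmbedAux.S T u)
    have h2 := EmbedAux.idxN_pos (EmbedAux.S T v)
    exact EmbedAux.S_inj T (EmbedAux.idxN_inj _ _ (by omega))
  · apply Fin.ext
    show EmbedAux.idxN (EmbedAux.S T T.root) - 1 = 0
    rw [EmbedAux.S_root, EmbedAux.idxN_nil]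
  · exact EmbedAux.heapTree_binary _ hm
  · intro u v huv
    obtain ⟨r, hr⟩ := EmbedAux.anc_prefix T huv
    refine ⟨r.length, ?_⟩
    apply Fin.ext
    rw [EmbedAux.heapTree_iterate_val]
    show EmbedAux.hpar^[r.length] (EmbedAux.idxN (EmbedAux.S T v) - 1)
      = EmbedAux.idxN (EmbedAux.S T u) - 1
    rw [← hr]
    exact EmbedAux.hpar_iterate_idx r (EmbedAux.S T u)
  · have := EmbedAux.heapTree_height_le L
    have h3 : (EmbedAux.heapTree (2 ^ (L + 1)) hm).height ≤ L + 1 := this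
    omega
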